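/- Let p and q be real numbers with 0 < q < p ≤ 1, let n be a positive integer, let u be a real number, and let v be a real number with v < 0 such that u + v − j ≠ 0 for every j ∈ ℕ. Then the series Σ_{κ=0}^{∞} C_{p,q}(n+κ−1,κ) · p^{κ(v−n+1)} · q^{n(u−κ)} · [u]_{κ,p,q} / [u+v]_{n+κ,p,q} converges and its sum equals 1/[v]_{n,p,q}. -/

import Mathlib

/-- The (p,q)-deformed number `[x]_{p,q} = (p^x - q^x)/(p - q)` (real powers). -/
noncomputable def pqNum (p q x : ℝ) : ℝ := (p ^ x - q ^ x) / (p - q)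

/-- The (p,q)-factorial `[n]_{p,q}! = ∏_{i=1}^n [i]_{p,q}`. -/
noncomputable def pqFac (p q : ℝ) (n : ℕ) : ℝ := ∏ i ∈ Finset.range n, pqNum p q ((i : ℝ) + 1)

/-- The κ-th order (p,q)-factorial `[x]_{κ,p,q} = ∏_{v=0}^{κ-1} [x-v]_{p,q}`. -/
noncomputable def pqFacOrd (p q x : ℝ) (j : ℕ) : ℝ := ∏ v ∈ Finset.range j, pqNum p q (x - (v : ℝ))

/-- The (p,q)-binomial coefficient with natural upper argument m:
`C_{p,q}(m,κ) = [m]_{κ,p,q}/[κ]_{p,q}!`. -/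
noncomputable def pqBinomN (p q : ℝ) (m k : ℕ) : ℝ := pqFacOrd p q (m : ℝ) k / pqFac p q k


section lemmas
variable {p q : ℝ}

lemma pqNum_add (hq : 0 < q) (hqp : q < p) (x y : ℝ) :
    pqNum p q (x + y) = p ^ y * pqNum p q x + q ^ x * pqNum p q y := by
  have hp : 0 < p := hq.trans hqp
  unfold pqNum
  rw [Real.rpow_add hp, Real.rpow_add hq]
  have hpq : p - q ≠ 0 := sub_ne_zero.mpr hqp.ne'
  field_simp
  ring

lemma pqNum_pos (hq : 0 < q) (hqp : q < p) {x : ℝ} (hx : 0 < x) : 0 < pqNum p q x := by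
  have := Real.rpow_lt_rpow hq.le hqp hx
  exact div_pos (by linarith) (by linarith)

lemma pqNum_neg (hq : 0 < q) (hqp : q < p) {x : ℝ} (hx : x < 0) : pqNum p q x < 0 := by
  have := Real.rpow_lt_rpow_of_neg hq hqp hx
  exact div_neg_of_neg_of_pos (by linarith) (by linarith)

lemma pqNum_ne_zero (hq : 0 < q) (hqp : q < p) {x : ℝ} (hx : x ≠ 0) : pqNum p q x ≠ 0 := by
  rcases hx.lt_or_gt with h | h
  · exact (pqNum_neg hq hqp h).ne
  · exact (pqNum_pos hq hqp h).ne'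

lemma pqFacOrd_zero (x : ℝ) : pqFacOrd p q x 0 = 1 := Finset.prod_range_zero _

lemma pqFacOrd_succ (x : ℝ) (k : ℕ) :
    pqFacOrd p q x (k+1) = pqFacOrd p q x k * pqNum p q (x - k) := Finset.prod_range_succ _ _

lemma pqFacOrd_succ' (x : ℝ) (k : ℕ) :
    pqFacOrd p q x (k+1) = pqNum p q x * pqFacOrd p q (x-1) k := by
  unfold pqFacOrd
  rw [Finset.prod_range_succ' (fun i => pqNum p q (x - (i : ℝ))) k]
  simp only [Nat.cast_zero, sub_zero, Nat.cast_add, Nat.cast_one]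
  rw [mul_comm]
  congr 1
  refine Finset.prod_congr rfl fun i _ => ?_
  congr 1
  ring

lemma pqFac_pos (hq : 0 < q) (hqp : q < p) (k : ℕ) : 0 < pqFac p q k := by
  refine Finset.prod_pos fun i _ => pqNum_pos hq hqp (by positivity)

lemma pqFacOrd_self (k : ℕ) : pqFacOrd p q (k : ℝ) k = pqFac p q k := by
  unfold pqFacOrd pqFac
  rw [← Finset.prod_range_reflect]
  refine Finset.prod_congr rfl fun i hi => ?_
  congr 1
  rw [Finset.mem_range] at hi
  have : (↑(k - 1 - i) : ℝ) = (k : ℝ) - 1 - i := by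
    have h1 : i ≤ k - 1 := by omega
    have h2 : 1 ≤ k := by omega
    push_cast [Nat.cast_sub h1, Nat.cast_sub h2]
    ring
  rw [this]; ring

lemma pqBinomN_self (hq : 0 < q) (hqp : q < p) (k : ℕ) : pqBinomN p q k k = 1 := by
  unfold pqBinomN
  rw [pqFacOrd_self, div_self (pqFac_pos hq hqp k).ne']

lemma pqFacOrd_ne_zero (hq : 0 < q) (hqp : q < p) {x : ℝ} (k : ℕ) (h : ∀ i : ℕ, x - i ≠ 0) :
    pqFacOrd p q x k ≠ 0 := by
  unfold pqFacOrd
  exact Finset.prod_ne_zero_iff.mpr fun i _ => pqNum_ne_zero hq hqp (h i)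

lemma pqFacOrd_neg_ne_zero (hq : 0 < q) (hqp : q < p) {x : ℝ} (hx : x < 0) (k : ℕ) :
    pqFacOrd p q x k ≠ 0 := by
  refine pqFacOrd_ne_zero hq hqp k fun i => ?_
  have : (0:ℝ) ≤ i := Nat.cast_nonneg i
  intro h; nlinarith

end lemmas

section basecase
variable {p q : ℝ}

lemma pq_tendsto_ratio_aux (hq : 0 < q) (hqp : q < p) (x : ℝ) :
    Filter.Tendsto (fun N : ℕ => (p/q) ^ (x - (N : ℝ))) Filter.atTop (nhds 0) := by
  have hp : 0 < p := hq.trans hqp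
  have hc1 : 1 < p / q := (one_lt_div hq).mpr hqp
  have heq : ∀ N : ℕ, (p/q) ^ (x - (N : ℝ)) = (p/q) ^ x / (p/q) ^ N := by
    intro N
    rw [Real.rpow_sub (by positivity), Real.rpow_natCast]
  simp_rw [heq]
  exact Filter.Tendsto.div_atTop tendsto_const_nhds
    (tendsto_pow_atTop_atTop_of_one_lt hc1)

lemma pqNum_ratio (hq : 0 < q) (hqp : q < p) (x : ℝ) :
    pqNum p q x = q ^ x * ((p/q) ^ x - 1) / (p - q) := by
  have hp : 0 < p := hq.trans hqp
  have hqx : (0:ℝ) < q ^ x := Real.rpow_pos_of_pos hq x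
  unfold pqNum
  rw [Real.div_rpow hp.le hq.le]
  field_simp

lemma pq_base (hq : 0 < q) (hqp : q < p) (u v : ℝ) (hv : v < 0)
    (huv : ∀ j : ℕ, u + v - (j : ℝ) ≠ 0) :
    HasSum
      (fun κ : ℕ =>
        pqBinomN p q (1 + κ - 1) κ * p ^ ((κ : ℝ) * (v - ((1:ℕ) : ℝ) + 1))
          * q ^ (((1:ℕ) : ℝ) * (u - (κ : ℝ)))
          * pqFacOrd p q u κ / pqFacOrd p q (u + v) (1 + κ))
      (1 / pqFacOrd p q v 1) := by
  have hp : 0 < p := hq.trans hqp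
  have hNv : pqNum p q v < 0 := pqNum_neg hq hqp hv
  have hNv0 : pqNum p q v ≠ 0 := hNv.ne
  have hD : ∀ k, pqFacOrd p q (u+v) k ≠ 0 := fun k => pqFacOrd_ne_zero hq hqp k huv
  set t : ℕ → ℝ := fun κ => p ^ ((κ:ℝ) * v) * q ^ (u - (κ:ℝ)) * pqFacOrd p q u κ
      / pqFacOrd p q (u+v) (κ+1) with ht
  set e : ℕ → ℝ := fun N => p ^ ((N:ℝ) * v) * pqFacOrd p q u N / pqFacOrd p q (u+v) N with he
  have he0 : e 0 = 1 := by simp [he, pqFacOrd_zero]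
  -- telescoping identity
  have htel : ∀ κ : ℕ, pqNum p q v * t κ = e κ - e (κ+1) := by
    intro κ
    have hadd := pqNum_add hq hqp (u - (κ:ℝ)) v
    have harg : u - (κ:ℝ) + v = u + v - (κ:ℝ) := by ring
    rw [harg] at hadd
    have hc : ((κ+1:ℕ):ℝ) * v = (κ:ℝ)*v + v := by push_cast; ring
    have hN : pqNum p q (u+v-(κ:ℝ)) ≠ 0 := pqNum_ne_zero hq hqp (huv κ)
    simp only [ht, he, pqFacOrd_succ, hc, Real.rpow_add hp]
    field_simp [hD κ, hN]
    linear_combination (-pqFacOrd p q u κ) * hadd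
  -- ratio of e
  have hrat : ∀ N : ℕ, e (N+1) = e N * (p ^ v * pqNum p q (u - (N:ℝ)) / pqNum p q (u + v - (N:ℝ))) := by
    intro N
    have hN : pqNum p q (u+v-(N:ℝ)) ≠ 0 := pqNum_ne_zero hq hqp (huv N)
    have hc : ((N+1:ℕ):ℝ) * v = (N:ℝ)*v + v := by push_cast; ring
    simp only [he, pqFacOrd_succ, hc, Real.rpow_add hp]
    field_simp
  -- limit of the ratio
  set r : ℕ → ℝ := fun N => p ^ v * pqNum p q (u - (N:ℝ)) / pqNum p q (u + v - (N:ℝ)) with hr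
  have hqv : (0:ℝ) < q ^ v := Real.rpow_pos_of_pos hq v
  have hrlt : p ^ v / q ^ v < 1 :=
    (div_lt_one hqv).mpr (Real.rpow_lt_rpow_of_neg hq hqp hv)
  have hrpos : 0 < p ^ v / q ^ v := by positivity
  have hrr : ∀ N : ℕ, r N = p ^ v / q ^ v *
      (((p/q) ^ (u - (N:ℝ)) - 1) / ((p/q) ^ (u + v - (N:ℝ)) - 1)) := by
    intro N
    simp only [hr]
    rw [pqNum_ratio hq hqp (u - (N:ℝ)), pqNum_ratio hq hqp (u + v - (N:ℝ))]
    have hd : (p/q) ^ (u + v - (N:ℝ)) - 1 ≠ 0 := by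
      intro h
      have : (p/q) ^ (u + v - (N:ℝ)) = 1 := by linarith
      have hne : u + v - (N:ℝ) ≠ 0 := huv N
      have hc1 : (1:ℝ) < p/q := (one_lt_div hq).mpr hqp
      rcases hne.lt_or_gt with hlt | hlt
      · have := Real.rpow_lt_one_of_one_lt_of_neg hc1 hlt
        linarith
      · have := Real.one_lt_rpow_iff_of_pos (by positivity : (0:ℝ) < p/q) |>.mpr (Or.inl ⟨hc1, hlt⟩)
        linarith
    have hq1 : q ^ (u - (N:ℝ)) = q ^ (u + v - (N:ℝ)) * q ^ (-v) := by
      rw [← Real.rpow_add hq]; congr 1; ring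
    rw [hq1]
    have hqv2 : (0:ℝ) < q ^ (u + v - (N:ℝ)) := Real.rpow_pos_of_pos hq _
    have hpq : p - q ≠ 0 := sub_ne_zero.mpr hqp.ne'
    field_simp
    rw [Real.rpow_neg hq.le]
    field_simp
  have hlim : Filter.Tendsto r Filter.atTop (nhds (p ^ v / q ^ v)) := by
    have h1 := pq_tendsto_ratio_aux hq hqp u
    have h2 := pq_tendsto_ratio_aux hq hqp (u + v)
    have h2' : Filter.Tendsto (fun N : ℕ => (p/q) ^ (u + v - (N:ℝ))) Filter.atTop (nhds 0) := h2
    have hnum := h1.sub_const 1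
    have hden := h2'.sub_const 1
    have hdiv := hnum.div hden (by norm_num)
    have := (hdiv.const_mul (p ^ v / q ^ v))
    simp only [zero_sub] at this
    have hval : p ^ v / q ^ v * (-1 / -1) = p ^ v / q ^ v := by norm_num
    rw [hval] at this
    refine this.congr fun N => ?_
    rw [hrr N]
    simp [Pi.div_apply]
  -- summability of e
  set ρ : ℝ := (p ^ v / q ^ v + 1) / 2 with hρ
  have hρ1 : ρ < 1 := by rw [hρ]; linarith
  have habs : Filter.Tendsto (fun N => |r N|) Filter.atTop (nhds (p ^ v / q ^ v)) := by
    have := hlim.abs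
    rwa [abs_of_pos hrpos] at this
  have hev : ∀ᶠ N in Filter.atTop, |r N| < ρ :=
    habs.eventually_lt_const (by rw [hρ]; linarith)
  have hse : Summable e := by
    refine summable_of_ratio_norm_eventually_le hρ1 (hev.mono fun N hN => ?_)
    rw [hrat N, norm_mul, mul_comm]
    have : ‖p ^ v * pqNum p q (u - (N:ℝ)) / pqNum p q (u + v - (N:ℝ))‖ = |r N| := by
      rw [Real.norm_eq_abs, hr]
    rw [this]
    exact mul_le_mul_of_nonneg_right hN.le (norm_nonneg _)
  have helim : Filter.Tendsto e Filter.atTop (nhds 0) := hse.tendsto_atTop_zero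
  -- summability of t
  have hteq : ∀ κ, t κ = (e κ - e (κ+1)) / pqNum p q v := by
    intro κ
    rw [← htel κ, mul_comm, mul_div_assoc, div_self hNv0, mul_one]
  have hsub : Summable (fun κ => e κ - e (κ+1)) :=
    hse.sub ((summable_nat_add_iff 1).mpr hse)
  have hst : Summable t := by
    refine (hsub.div_const (pqNum p q v)).congr fun κ => (hteq κ).symm
  -- partial sums
  have hps : ∀ M, ∑ κ ∈ Finset.range M, t κ = (1 - e M) / pqNum p q v := by
    intro M
    rw [← he0]
    rw [← Finset.sum_range_sub' e M]
    rw [Finset.sum_div]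
    exact Finset.sum_congr rfl fun κ _ => hteq κ
  have hlim2 : Filter.Tendsto (fun M => ∑ κ ∈ Finset.range M, t κ) Filter.atTop
      (nhds ((1 - 0) / pqNum p q v)) := by
    simp_rw [hps]
    exact (tendsto_const_nhds.sub helim).div_const _
  have hhs := hst.hasSum
  have heq := tendsto_nhds_unique hhs.tendsto_sum_nat hlim2
  have hgoal : HasSum t ((1-0)/pqNum p q v) := heq ▸ hhs
  -- convert to the required shape
  have hfun : ∀ κ : ℕ,
      pqBinomN p q (1 + κ - 1) κ * p ^ ((κ : ℝ) * (v - ((1:ℕ) : ℝ) + 1))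
        * q ^ (((1:ℕ) : ℝ) * (u - (κ : ℝ)))
        * pqFacOrd p q u κ / pqFacOrd p q (u + v) (1 + κ) = t κ := by
    intro κ
    have h1 : 1 + κ - 1 = κ := by omega
    have h2 : 1 + κ = κ + 1 := by omega
    rw [h1, h2, pqBinomN_self hq hqp]
    have h3 : (κ:ℝ) * (v - ((1:ℕ):ℝ) + 1) = (κ:ℝ) * v := by push_cast; ring
    have h4 : (((1:ℕ)):ℝ) * (u - (κ:ℝ)) = u - (κ:ℝ) := by push_cast; ring
    rw [h3, h4, one_mul]
  have hval1 : pqFacOrd p q v 1 = pqNum p q v := by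
    unfold pqFacOrd; rw [Finset.prod_range_one]; norm_num
  rw [hval1]
  have : (1 - 0) / pqNum p q v = 1 / pqNum p q v := by norm_num
  rw [this] at hgoal
  exact hgoal.congr_fun hfun

lemma pqBinom_rec {p q : ℝ} (hq : 0 < q) (hqp : q < p) (n κ : ℕ) (hn : 1 ≤ n) :
    pqBinomN p q (n+κ) κ * pqNum p q (n:ℝ) = pqNum p q ((n:ℝ)+(κ:ℝ)) * pqBinomN p q (n+κ-1) κ := by
  have h1 : pqFacOrd p q (↑(n+κ)) (κ+1) = pqFacOrd p q (↑(n+κ)) κ * pqNum p q (↑(n+κ) - (κ:ℝ)) :=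
    pqFacOrd_succ _ _
  have h2 : pqFacOrd p q (↑(n+κ)) (κ+1) = pqNum p q (↑(n+κ)) * pqFacOrd p q (↑(n+κ) - 1) κ :=
    pqFacOrd_succ' _ _
  have hcast1 : ((n+κ:ℕ):ℝ) - (κ:ℝ) = (n:ℝ) := by push_cast; ring
  have hcast2 : ((n+κ:ℕ):ℝ) - 1 = ((n+κ-1:ℕ):ℝ) := by
    have h : 1 ≤ n + κ := le_add_right hn
    push_cast [Nat.cast_sub h]
    ring
  have hcast3 : ((n+κ:ℕ):ℝ) = (n:ℝ)+(κ:ℝ) := by push_cast; ring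
  rw [hcast1] at h1
  rw [hcast2] at h2
  rw [hcast3] at h1 h2
  have hFF : pqFacOrd p q ((n:ℝ)+(κ:ℝ)) κ * pqNum p q (n:ℝ)
      = pqNum p q ((n:ℝ)+(κ:ℝ)) * pqFacOrd p q (↑(n+κ-1)) κ := by rw [← h1, h2]
  have hcast4 : ((n + κ - 1:ℕ):ℝ) = (n:ℝ) + (κ:ℝ) - 1 := by rw [← hcast2, hcast3]
  rw [hcast4] at hFF
  unfold pqBinomN
  rw [hcast3, hcast4]
  have hFac : pqFac p q κ ≠ 0 := (pqFac_pos hq hqp κ).ne'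
  field_simp
  linear_combination hFF

/-- The series expansion of `1/[v]_{n,p,q}`. -/
theorem pq_inverse_expansion_series (p q : ℝ) (hq : 0 < q) (hqp : q < p) (hp : p ≤ 1)
    (n : ℕ) (hn : 0 < n) (u v : ℝ) (hv : v < 0)
    (huv : ∀ j : ℕ, u + v - (j : ℝ) ≠ 0) :
    HasSum
      (fun κ : ℕ =>
        pqBinomN p q (n + κ - 1) κ * p ^ ((κ : ℝ) * (v - (n : ℝ) + 1))
          * q ^ ((n : ℝ) * (u - (κ : ℝ)))
          * pqFacOrd p q u κ / pqFacOrd p q (u + v) (n + κ))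
      (1 / pqFacOrd p q v n) := by
  have hp0 : 0 < p := hq.trans hqp
  have key : ∀ m : ℕ, 1 ≤ m → ∀ w : ℝ, w < 0 → (∀ j : ℕ, u + w - (j : ℝ) ≠ 0) →
      HasSum
        (fun κ : ℕ =>
          pqBinomN p q (m + κ - 1) κ * p ^ ((κ : ℝ) * (w - (m : ℝ) + 1))
            * q ^ ((m : ℝ) * (u - (κ : ℝ)))
            * pqFacOrd p q u κ / pqFacOrd p q (u + w) (m + κ))
        (1 / pqFacOrd p q w m) := by
    intro m hm
    induction m, hm using Nat.le_induction with
    | base =>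
      intro w hw huw
      exact pq_base hq hqp u w hw huw
    | succ n hn ih =>
      intro w hw huw
      have hNn : 0 < pqNum p q (n:ℝ) :=
        pqNum_pos hq hqp (by exact_mod_cast Nat.pos_of_ne_zero (by omega))
      have hNn0 : pqNum p q (n:ℝ) ≠ 0 := hNn.ne'
      have hw1 : w - 1 < 0 := by linarith
      have huw1 : ∀ j : ℕ, u + (w - 1) - (j : ℝ) ≠ 0 := by
        intro j
        have h := huw (j+1)
        push_cast at h ⊢
        intro hcon; apply h; linarith
      have h1 := ih (w-1) hw1 huw1
      have h2 := ih w hw huw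
      set B : ℝ := q ^ ((n:ℝ) - w) / pqNum p q (n:ℝ) with hB
      have hcomb := (h1.sub (h2.mul_left (p ^ (n:ℝ)))).mul_left B
      -- nonvanishing facts
      have hNuw : pqNum p q (u+w) ≠ 0 := by
        have h := huw 0
        push_cast at h
        exact pqNum_ne_zero hq hqp (by simpa using h)
      have hDen1 : ∀ k, pqFacOrd p q (u+(w-1)) k ≠ 0 := fun k =>
        pqFacOrd_ne_zero hq hqp k huw1
      have hDen2 : ∀ k, pqFacOrd p q (u+w) k ≠ 0 := fun k =>
        pqFacOrd_ne_zero hq hqp k huw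
      have hNuw' : pqNum p q (w+u) ≠ 0 := by rwa [add_comm w u]
      have hDen1' : ∀ k, pqFacOrd p q (-1+w+u) k ≠ 0 := fun k => by
        have := hDen1 k
        rwa [show u+(w-1) = -1+w+u by ring] at this
      have hDen2' : ∀ k, pqFacOrd p q (w+u) k ≠ 0 := fun k => by
        have := hDen2 k
        rwa [add_comm u w] at this
      -- denominator recursions
      have hD1 : ∀ κ : ℕ, pqFacOrd p q (u+w) (n+1+κ)
          = pqNum p q (u+w) * pqFacOrd p q (u+(w-1)) (n+κ) := by
        intro κ
        have h := pqFacOrd_succ' (p := p) (q := q) (u+w) (n+κ)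
        have hsh : n+1+κ = (n+κ)+1 := by omega
        rw [hsh, h]
        congr 2
        ring
      have hD2 : ∀ κ : ℕ, pqFacOrd p q (u+w) (n+1+κ)
          = pqFacOrd p q (u+w) (n+κ) * pqNum p q (u+w-((n:ℝ)+(κ:ℝ))) := by
        intro κ
        have h := pqFacOrd_succ (p := p) (q := q) (u+w) (n+κ)
        have hsh : n+1+κ = (n+κ)+1 := by omega
        rw [hsh, h]
        congr 2
        push_cast
        ring
      -- key scalar identity
      have key1 : ∀ κ : ℕ, q ^ (u-(κ:ℝ)) * pqNum p q ((n:ℝ)+(κ:ℝ))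
          = q ^ ((n:ℝ) - w) * (pqNum p q (u+w)
            - p ^ ((n:ℝ)+(κ:ℝ)) * pqNum p q (u+w-((n:ℝ)+(κ:ℝ)))) := by
        intro κ
        have hadd := pqNum_add hq hqp (u+w-((n:ℝ)+(κ:ℝ))) ((n:ℝ)+(κ:ℝ))
        rw [sub_add_cancel] at hadd
        rw [hadd]
        have hqq : q ^ ((n:ℝ)-w) * q ^ (u+w-((n:ℝ)+(κ:ℝ))) = q ^ (u - (κ:ℝ)) := by
          rw [← Real.rpow_add hq]; congr 1; ring
        calc q ^ (u-(κ:ℝ)) * pqNum p q ((n:ℝ)+(κ:ℝ))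
            = (q ^ ((n:ℝ)-w) * q ^ (u+w-((n:ℝ)+(κ:ℝ)))) * pqNum p q ((n:ℝ)+(κ:ℝ)) := by rw [hqq]
          _ = q ^ ((n:ℝ)-w) * (p ^ ((n:ℝ)+(κ:ℝ)) * pqNum p q (u+w-((n:ℝ)+(κ:ℝ)))
                + q ^ (u+w-((n:ℝ)+(κ:ℝ))) * pqNum p q ((n:ℝ)+(κ:ℝ))
                - p ^ ((n:ℝ)+(κ:ℝ)) * pqNum p q (u+w-((n:ℝ)+(κ:ℝ)))) := by ring
      -- the common frame W
      set W : ℕ → ℝ := fun κ =>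
        pqBinomN p q (n+κ-1) κ * p ^ ((κ:ℝ)*((w-1) - (n:ℝ) + 1)) * q ^ ((n:ℝ)*(u-(κ:ℝ)))
          * pqFacOrd p q u κ / pqFacOrd p q (u+w) (n+1+κ) with hW
      -- three decomposition identities
      have hA : ∀ κ : ℕ,
          pqBinomN p q (n+1+κ-1) κ * p ^ ((κ:ℝ) * (w - ((n+1:ℕ):ℝ) + 1))
            * q ^ (((n+1:ℕ):ℝ) * (u - (κ:ℝ)))
            * pqFacOrd p q u κ / pqFacOrd p q (u+w) (n+1+κ)
          = W κ * (q ^ (u-(κ:ℝ)) * pqNum p q ((n:ℝ)+(κ:ℝ)) / pqNum p q (n:ℝ)) := by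
        intro κ
        have hb1 : n+1+κ-1 = n+κ := by omega
        have hb3 := pqBinom_rec hq hqp n κ (by omega)
        have hb3' : pqBinomN p q (n+κ) κ
            = pqNum p q ((n:ℝ)+(κ:ℝ)) * pqBinomN p q (n+κ-1) κ / pqNum p q (n:ℝ) := by
          rw [eq_div_iff hNn0]; exact hb3
        have hE1 : (κ:ℝ) * (w - ((n+1:ℕ):ℝ) + 1) = (κ:ℝ)*((w-1) - (n:ℝ) + 1) := by
          push_cast; ring
        have hE2 : q ^ (((n+1:ℕ):ℝ) * (u - (κ:ℝ)))
            = q ^ ((n:ℝ)*(u-(κ:ℝ))) * q ^ (u-(κ:ℝ)) := by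
          rw [← Real.rpow_add hq]; congr 1; push_cast; ring
        rw [hb1, hb3', hE1, hE2, hW]
        field_simp
      have hBB : ∀ κ : ℕ,
          pqBinomN p q (n+κ-1) κ * p ^ ((κ:ℝ)*((w-1) - (n:ℝ) + 1)) * q ^ ((n:ℝ)*(u-(κ:ℝ)))
            * pqFacOrd p q u κ / pqFacOrd p q (u+(w-1)) (n+κ)
          = W κ * pqNum p q (u+w) := by
        intro κ
        rw [hW]
        simp only []
        rw [hD1 κ]
        field_simp [hNuw, hNuw', hDen1 (n+κ), hDen1' (n+κ)]
      have hC : ∀ κ : ℕ,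
          p ^ ((n:ℝ)) * (pqBinomN p q (n+κ-1) κ * p ^ ((κ:ℝ)*(w - (n:ℝ) + 1)) * q ^ ((n:ℝ)*(u-(κ:ℝ)))
            * pqFacOrd p q u κ / pqFacOrd p q (u+w) (n+κ))
          = W κ * (p ^ ((n:ℝ)+(κ:ℝ)) * pqNum p q (u+w-((n:ℝ)+(κ:ℝ)))) := by
        intro κ
        have hE3 : p ^ ((κ:ℝ)*(w - (n:ℝ) + 1)) = p ^ ((κ:ℝ)*((w-1) - (n:ℝ) + 1)) * p ^ ((κ:ℝ)) := by
          rw [← Real.rpow_add hp0]; congr 1; ring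
        have hE4 : p ^ ((n:ℝ)) * p ^ ((κ:ℝ)) = p ^ ((n:ℝ)+(κ:ℝ)) := (Real.rpow_add hp0 _ _).symm
        have hM : pqNum p q (u+w-((n:ℝ)+(κ:ℝ))) ≠ 0 := by
          have h := huw (n+κ)
          push_cast at h
          exact pqNum_ne_zero hq hqp h
        rw [hW]
        simp only []
        rw [hD2 κ, hE3, ← hE4]
        field_simp [hM, hDen2 (n+κ), hDen2' (n+κ)]
      -- value identity
      have hval : B * (1 / pqFacOrd p q (w-1) n - p ^ ((n:ℝ)) * (1 / pqFacOrd p q w n))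
          = 1 / pqFacOrd p q w (n+1) := by
        have hFw1 : pqFacOrd p q w (n+1) = pqNum p q w * pqFacOrd p q (w-1) n :=
          pqFacOrd_succ' w n
        have hFw2 : pqFacOrd p q w (n+1) = pqFacOrd p q w n * pqNum p q (w - (n:ℝ)) :=
          pqFacOrd_succ w n
        have key2 : pqNum p q w = p ^ ((n:ℝ)) * pqNum p q (w - (n:ℝ))
            + q ^ (w - (n:ℝ)) * pqNum p q ((n:ℝ)) := by
          have h := pqNum_add hq hqp (w - (n:ℝ)) ((n:ℝ))
          rw [sub_add_cancel] at h
          exact h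
        have hqq : q ^ ((n:ℝ)-w) * q ^ (w-(n:ℝ)) = 1 := by
          rw [← Real.rpow_add hq, show (n:ℝ)-w+(w-(n:ℝ)) = 0 by ring, Real.rpow_zero]
        have hZ1 : pqFacOrd p q (w-1) n ≠ 0 := pqFacOrd_neg_ne_zero hq hqp (by linarith) n
        have hZ2 : pqFacOrd p q w n ≠ 0 := pqFacOrd_neg_ne_zero hq hqp hw n
        have hZ3 : pqNum p q w ≠ 0 := (pqNum_neg hq hqp hw).ne
        have hZ4 : pqNum p q (w - (n:ℝ)) ≠ 0 := by
          have : w - (n:ℝ) < 0 := by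
            have : (0:ℝ) ≤ (n:ℝ) := Nat.cast_nonneg n
            linarith
          exact (pqNum_neg hq hqp this).ne
        have hFw12 : pqFacOrd p q w n * pqNum p q (w - (n:ℝ)) = pqNum p q w * pqFacOrd p q (w-1) n :=
          hFw2.symm.trans hFw1
        have hcross : q ^ ((n:ℝ)-w) * (1 * pqFacOrd p q w n - pqFacOrd p q (w-1) n * p ^ ((n:ℝ)))
            * (pqNum p q w * pqFacOrd p q (w-1) n)
            = 1 * (pqNum p q ((n:ℝ)) * (pqFacOrd p q (w-1) n * pqFacOrd p q w n)) := by
          calc q ^ ((n:ℝ)-w) * (1 * pqFacOrd p q w n - pqFacOrd p q (w-1) n * p ^ ((n:ℝ)))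
              * (pqNum p q w * pqFacOrd p q (w-1) n)
              = q ^ ((n:ℝ)-w) * pqFacOrd p q (w-1) n * (pqFacOrd p q w n * pqNum p q w)
                - q ^ ((n:ℝ)-w) * pqFacOrd p q (w-1) n * p ^ ((n:ℝ))
                  * (pqNum p q w * pqFacOrd p q (w-1) n) := by ring
            _ = q ^ ((n:ℝ)-w) * pqFacOrd p q (w-1) n * (pqFacOrd p q w n * pqNum p q w)
                - q ^ ((n:ℝ)-w) * pqFacOrd p q (w-1) n * p ^ ((n:ℝ))
                  * (pqFacOrd p q w n * pqNum p q (w - (n:ℝ))) := by rw [hFw12]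
            _ = q ^ ((n:ℝ)-w) * pqFacOrd p q (w-1) n * pqFacOrd p q w n
                  * (pqNum p q w - p ^ ((n:ℝ)) * pqNum p q (w - (n:ℝ))) := by ring
            _ = q ^ ((n:ℝ)-w) * pqFacOrd p q (w-1) n * pqFacOrd p q w n
                  * (p ^ ((n:ℝ)) * pqNum p q (w - (n:ℝ)) + q ^ (w - (n:ℝ)) * pqNum p q ((n:ℝ))
                     - p ^ ((n:ℝ)) * pqNum p q (w - (n:ℝ))) := by rw [← key2]
            _ = (q ^ ((n:ℝ)-w) * q ^ (w - (n:ℝ))) * pqNum p q ((n:ℝ))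
                  * (pqFacOrd p q (w-1) n * pqFacOrd p q w n) := by ring
            _ = 1 * (pqNum p q ((n:ℝ)) * (pqFacOrd p q (w-1) n * pqFacOrd p q w n)) := by
                rw [hqq]; ring
        rw [hB, hFw1, mul_one_div, div_sub_div _ _ hZ1 hZ2, div_mul_div_comm,
          div_eq_div_iff (mul_ne_zero hNn0 (mul_ne_zero hZ1 hZ2)) (mul_ne_zero hZ3 hZ1)]
        linear_combination hcross
      -- assemble
      rw [← hval]
      refine hcomb.congr_fun fun κ => ?_
      rw [hA κ]
      have ht1 := hBB κ
      have ht2 := hC κ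
      calc W κ * (q ^ (u-(κ:ℝ)) * pqNum p q ((n:ℝ)+(κ:ℝ)) / pqNum p q (n:ℝ))
          = (q ^ ((n:ℝ)-w) / pqNum p q (n:ℝ)) * (W κ * pqNum p q (u+w)
              - W κ * (p ^ ((n:ℝ)+(κ:ℝ)) * pqNum p q (u+w-((n:ℝ)+(κ:ℝ))))) := by
            have hk := key1 κ
            field_simp [hNn0]
            linear_combination W κ * hk
        _ = B * ((pqBinomN p q (n+κ-1) κ * p ^ ((κ:ℝ)*((w-1) - (n:ℝ) + 1)) * q ^ ((n:ℝ)*(u-(κ:ℝ)))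
            * pqFacOrd p q u κ / pqFacOrd p q (u+(w-1)) (n+κ))
            - p ^ ((n:ℝ)) * (pqBinomN p q (n+κ-1) κ * p ^ ((κ:ℝ)*(w - (n:ℝ) + 1)) * q ^ ((n:ℝ)*(u-(κ:ℝ)))
            * pqFacOrd p q u κ / pqFacOrd p q (u+w) (n+κ))) := by
            rw [ht1, ht2, hB]
  exact key n hn v hv huv
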